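/- For every integer n ≥ 3, the real roots of P_n are exactly the n pairwise distinct numbers cos(kπ/(n-1)) for k = 0, 1, ..., n-1; in particular all roots of P_n are simple (have multiplicity one) and lie in the segment [-1,1]. -/

import Mathlib

open Finset Polynomial Real

noncomputable section

/-- Binomial coefficient `C(a, b)` for integer lower index, zero when `b < 0` or `b > a`. -/
def chooseZ (a : ℕ) (b : ℤ) : ℤ := if 0 ≤ b then (a.choose b.toNat : ℤ) else 0

/-- `f n k m p = ∑_{i=0}^{n} (-1)^i C(n,i) C(np+m-ip, n+k)`. -/
def f (n : ℕ) (k : ℤ) (m p : ℕ) : ℤ :=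
  ∑ i ∈ Finset.range (n + 1),
    (-1) ^ i * (n.choose i : ℤ) * chooseZ (n * p + m - i * p) ((n : ℤ) + k)

/-- The coefficients `c(n,k,m,p)`. -/
def c (n : ℕ) (k : ℤ) (m p : ℕ) : ℤ :=
  if 0 ≤ k ∧ k ≤ (n : ℤ) ∧ (n : ℤ) % 2 = k % 2 ∧ 2 * (m : ℤ) ≤ (n : ℤ) + k then
    (-1) ^ ((((n : ℤ) - k) / 2).toNat) *
      f ((((n : ℤ) + k - 2 * m) / 2).toNat) (((n : ℤ) - k) / 2) m p
  else 0

/-- The polynomial `P_{n,m,p}(x) = ∑_{k=0}^n c(n,k,m,p) x^k`, as a real polynomial. -/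
def P (n m p : ℕ) : Polynomial ℝ :=
  ∑ k ∈ Finset.range (n + 1), Polynomial.C ((c n (k : ℤ) m p : ℝ)) * Polynomial.X ^ k

lemma chooseZ_succ (a : ℕ) (b : ℤ) :
    chooseZ (a+1) b = chooseZ a b + chooseZ a (b-1) := by
  unfold chooseZ
  rcases lt_trichotomy b 0 with h|h|h
  · rw [if_neg (by omega), if_neg (by omega), if_neg (by omega)]; ring
  · subst h; norm_num
  · rw [if_pos h.le, if_pos h.le, if_pos (by omega)]
    have hb : b.toNat = (b-1).toNat + 1 := by omega
    rw [hb, Nat.choose_succ_succ']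
    push_cast; ring

lemma f_rec (N : ℕ) (K : ℤ) :
    f (N+1) K 2 2 = 2 * f N K 2 2 + f N (K-1) 2 2 := by
  have expand : f (N+1) K 2 2 =
      (∑ i ∈ Finset.range (N+2),
        (-1)^i * (N.choose i : ℤ) * chooseZ ((N+1)*2+2 - i*2) ((N:ℤ)+1+K))
      + (∑ i ∈ Finset.range (N+2),
        (-1)^i * (if 1 ≤ i then (N.choose (i-1) : ℤ) else 0) *
          chooseZ ((N+1)*2+2 - i*2) ((N:ℤ)+1+K)) := by
    rw [f, ← Finset.sum_add_distrib]
    refine Finset.sum_congr rfl fun i _ => ?_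
    have : ((N+1).choose i : ℤ)
        = (N.choose i : ℤ) + (if 1 ≤ i then (N.choose (i-1) : ℤ) else 0) := by
      cases i with
      | zero => simp
      | succ j => simp [Nat.choose_succ_succ' N j]; ring
    rw [show ((N:ℤ)+1+K) = ((N+1 : ℕ) : ℤ) + K by push_cast; ring, this]
    ring
  have sumB : (∑ i ∈ Finset.range (N+2),
        (-1)^i * (if 1 ≤ i then (N.choose (i-1) : ℤ) else 0) *
          chooseZ ((N+1)*2+2 - i*2) ((N:ℤ)+1+K))
      = ∑ i ∈ Finset.range (N+1),
          -((-1)^i * (N.choose i : ℤ) * chooseZ (N*2+2 - i*2) ((N:ℤ)+1+K)) := by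
    rw [Finset.sum_range_succ' _ (N+1)]
    have h0 : ((-1:ℤ))^0 * (if 1 ≤ 0 then (N.choose (0-1) : ℤ) else 0) *
        chooseZ ((N+1)*2+2 - 0*2) ((N:ℤ)+1+K) = 0 := by norm_num
    rw [h0, add_zero]
    refine Finset.sum_congr rfl fun i hi => ?_
    have hi' : i ≤ N := by simpa [Nat.lt_succ_iff] using hi
    have harg : (N+1)*2+2 - (i+1)*2 = N*2+2 - i*2 := by omega
    rw [harg, if_pos (by omega : 1 ≤ i+1)]
    simp only [Nat.add_sub_cancel]
    rw [pow_succ]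
    ring
  have sumA : (∑ i ∈ Finset.range (N+2),
        (-1)^i * (N.choose i : ℤ) * chooseZ ((N+1)*2+2 - i*2) ((N:ℤ)+1+K))
      = ∑ i ∈ Finset.range (N+1),
          (-1)^i * (N.choose i : ℤ) * chooseZ ((N*2+2 - i*2)+2) ((N:ℤ)+1+K) := by
    rw [Finset.sum_range_succ]
    have : (N.choose (N+1) : ℤ) = 0 := by
      norm_cast; exact Nat.choose_eq_zero_of_lt (by omega)
    rw [this]
    rw [mul_zero, zero_mul, add_zero]
    refine Finset.sum_congr rfl fun i hi => ?_
    have hi' : i ≤ N := by simpa [Nat.lt_succ_iff] using hi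
    have harg : (N+1)*2+2 - i*2 = (N*2+2 - i*2)+2 := by omega
    rw [harg]
  rw [expand, sumA, sumB, ← Finset.sum_add_distrib]
  have frhs : 2 * f N K 2 2 + f N (K-1) 2 2
      = ∑ i ∈ Finset.range (N+1), ((-1)^i * (N.choose i : ℤ) *
          (2 * chooseZ (N*2+2 - i*2) ((N:ℤ)+K) + chooseZ (N*2+2 - i*2) ((N:ℤ)+K-1))) := by
    rw [f, f, Finset.mul_sum, ← Finset.sum_add_distrib]
    refine Finset.sum_congr rfl fun i _ => ?_
    rw [show (N:ℤ) + (K-1) = (N:ℤ)+K-1 by ring]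
    ring
  rw [frhs]
  refine Finset.sum_congr rfl fun i _ => ?_
  rw [show (N*2+2 - i*2)+2 = ((N*2+2 - i*2)+1)+1 from rfl, chooseZ_succ, chooseZ_succ, chooseZ_succ]
  rw [show (N:ℤ)+1+K-1 = (N:ℤ)+K by ring, show (N:ℤ)+K-1 = (N:ℤ)+1+K-1-1 by ring]
  ring

lemma f_neg (N : ℕ) (K : ℤ) (hK : K < 0) : f N K 2 2 = 0 := by
  induction N generalizing K with
  | zero =>
    have h : f 0 K 2 2 = chooseZ 2 K := by rw [f]; norm_num
    rw [h, chooseZ, if_neg (by omega)]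
  | succ M ih =>
    rw [f_rec, ih K hK, ih (K-1) (by omega)]
    ring

lemma f_zero (N : ℕ) : f N 0 2 2 = 2^N := by
  induction N with
  | zero =>
    have h : f 0 0 2 2 = chooseZ 2 0 := by rw [f]; norm_num
    rw [h, chooseZ, if_pos le_rfl]
    norm_num
  | succ M ih =>
    rw [f_rec, ih, f_neg M (0-1) (by omega)]
    ring

lemma f_big (N : ℕ) (K : ℤ) (hK : (N:ℤ)+2 < K) : f N K 2 2 = 0 := by
  induction N generalizing K with
  | zero =>
    have h : f 0 K 2 2 = chooseZ 2 K := by rw [f]; norm_num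
    rw [h, chooseZ, if_pos (by omega)]
    have : (2:ℕ) < K.toNat := by omega
    rw [Nat.choose_eq_zero_of_lt this]
    norm_num
  | succ M ih =>
    rw [f_rec, ih K (by push_cast; push_cast at hK; omega), ih (K-1) (by push_cast; push_cast at hK; omega)]
    ring

lemma c_rec (n : ℕ) (hn : 3 ≤ n) (k : ℤ) :
    c (n+2) k 2 2 = 2 * c (n+1) (k-1) 2 2 - c n k 2 2 := by
  by_cases hk : 1 ≤ k ∧ k ≤ (n:ℤ) ∧ (n:ℤ) % 2 = k % 2
  · obtain ⟨hk0, hkn, hkp⟩ := hk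
    have h4 : 4 ≤ (n:ℤ) + k := by omega
    obtain ⟨a, ha⟩ : ∃ a : ℕ, (n:ℤ) + k - 4 = 2*a := ⟨((n:ℤ)+k-4).toNat/2, by omega⟩
    obtain ⟨b, hb⟩ : ∃ b : ℕ, (n:ℤ) - k = 2*b := ⟨((n:ℤ)-k).toNat/2, by omega⟩
    rw [c, if_pos (by push_cast; omega), c, if_pos (by push_cast; omega),
        c, if_pos (by push_cast; omega)]
    rw [show ((((n:ℕ)+2 : ℕ):ℤ) + k - 2*(2:ℕ))/2 = (a:ℤ)+1 by push_cast; omega,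
        show ((((n:ℕ)+2 : ℕ):ℤ) - k)/2 = (b:ℤ)+1 by push_cast; omega,
        show ((((n:ℕ)+1 : ℕ):ℤ) + (k-1) - 2*(2:ℕ))/2 = (a:ℤ) by push_cast; omega,
        show ((((n:ℕ)+1 : ℕ):ℤ) - (k-1))/2 = (b:ℤ)+1 by push_cast; omega,
        show ((n:ℤ) + k - 2*(2:ℕ))/2 = (a:ℤ) by push_cast; omega,
        show ((n:ℤ) - k)/2 = (b:ℤ) by push_cast; omega]
    rw [show ((b:ℤ)+1).toNat = b+1 by omega, show ((a:ℤ)+1).toNat = a+1 by omega,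
        show ((b:ℤ)).toNat = b by omega, show ((a:ℤ)).toNat = a by omega]
    have h := f_rec a ((b:ℤ)+1)
    rw [show (b:ℤ)+1-1 = (b:ℤ) by ring] at h
    rw [h, pow_succ]
    ring
  · by_cases hk0 : k = 0 ∧ (n:ℤ) % 2 = 0
    · obtain ⟨hk00, hnp⟩ := hk0
      obtain ⟨a, ha⟩ : ∃ a : ℕ, (n:ℤ) - 4 = 2*a := ⟨((n:ℤ)-4).toNat/2, by omega⟩
      rw [c, if_pos (by push_cast; omega), c, if_neg (by push_cast; omega),
          c, if_pos (by push_cast; omega)]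
      rw [show ((((n:ℕ)+2 : ℕ):ℤ) + k - 2*(2:ℕ))/2 = (a:ℤ)+1 by push_cast; omega,
          show ((((n:ℕ)+2 : ℕ):ℤ) - k)/2 = (a:ℤ)+3 by push_cast; omega,
          show ((n:ℤ) + k - 2*(2:ℕ))/2 = (a:ℤ) by push_cast; omega,
          show ((n:ℤ) - k)/2 = (a:ℤ)+2 by push_cast; omega]
      rw [show ((a:ℤ)+1).toNat = a+1 by omega, show ((a:ℤ)+3).toNat = a+3 by omega,
          show ((a:ℤ)).toNat = a by omega, show ((a:ℤ)+2).toNat = a+2 by omega]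
      have h := f_rec a ((a:ℤ)+3)
      rw [show (a:ℤ)+3-1 = (a:ℤ)+2 by ring, f_big a ((a:ℤ)+3) (by omega)] at h
      rw [h, pow_succ, pow_succ, pow_succ]
      ring
    by_cases hk2 : k = (n:ℤ) + 2
    · obtain ⟨m, rfl⟩ : ∃ m : ℕ, n = m + 3 := ⟨n - 3, by omega⟩
      subst hk2
      rw [c, if_pos (by push_cast; omega), c, if_pos (by push_cast; omega),
          c, if_neg (by push_cast; omega)]
      rw [show ((((m+3:ℕ)+2 : ℕ):ℤ) + (((m+3:ℕ):ℤ)+2) - 2*(2:ℕ))/2 = ((m:ℤ)+3) by push_cast; omega,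
          show ((((m+3:ℕ)+2 : ℕ):ℤ) - (((m+3:ℕ):ℤ)+2))/2 = 0 by push_cast; omega,
          show ((((m+3:ℕ)+1 : ℕ):ℤ) + ((((m+3:ℕ):ℤ)+2)-1) - 2*(2:ℕ))/2 = ((m:ℤ)+2) by push_cast; omega,
          show ((((m+3:ℕ)+1 : ℕ):ℤ) - ((((m+3:ℕ):ℤ)+2)-1))/2 = 0 by push_cast; omega]
      rw [show ((m:ℤ)+3).toNat = m+3 by omega, show ((m:ℤ)+2).toNat = m+2 by omega,
          show ((0:ℤ)).toNat = 0 by omega]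
      have h := f_rec (m+2) 0
      rw [f_neg (m+2) (0-1) (by omega)] at h
      rw [show m+2+1 = m+3 from rfl] at h
      rw [h]
      ring
    · push_neg at hk
      rw [c, if_neg (by push_cast; omega), c, if_neg (by push_cast; omega),
          c, if_neg (by push_cast; omega)]
      ring

lemma P_coeff (n m p j : ℕ) : (P n m p).coeff j = (c n (j:ℤ) m p : ℝ) := by
  rw [P, Polynomial.finset_sum_coeff]
  simp only [Polynomial.coeff_C_mul, Polynomial.coeff_X_pow, mul_ite, mul_one, mul_zero]
  rw [Finset.sum_ite_eq (Finset.range (n+1)) j (fun k => ((c n (k:ℤ) m p : ℝ)))]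
  split
  · rfl
  · rename_i hj
    rw [Finset.mem_range] at hj
    rw [c, if_neg (by push_cast; omega)]
    norm_num

lemma P_rec (n : ℕ) (hn : 3 ≤ n) :
    P (n+2) 2 2 = 2 * Polynomial.X * P (n+1) 2 2 - P n 2 2 := by
  ext j
  rw [Polynomial.coeff_sub, P_coeff, P_coeff]
  have h2 : (2 * Polynomial.X * P (n+1) 2 2 : Polynomial ℝ)
      = Polynomial.C 2 * (Polynomial.X * P (n+1) 2 2) := by
    rw [map_ofNat]; ring
  rw [h2, Polynomial.coeff_C_mul]
  cases j with
  | zero =>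
    rw [Polynomial.mul_coeff_zero, Polynomial.coeff_X_zero]
    have h := c_rec n hn 0
    have hz : c (n+1) (0-1) 2 2 = 0 := by rw [c, if_neg (by omega)]
    rw [hz] at h
    push_cast [h]
    ring
  | succ i =>
    rw [Polynomial.coeff_X_mul, P_coeff]
    have h := c_rec n hn ((i:ℤ)+1)
    rw [show (i:ℤ)+1-1 = (i:ℤ) by ring] at h
    push_cast [h]
    ring

lemma P3 : P 3 2 2 = (Polynomial.X^2 - 1) * Polynomial.Chebyshev.U ℝ 1 := by
  have h0 : c 3 0 2 2 = 0 := by decide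
  have h1 : c 3 1 2 2 = -2 := by decide
  have h2 : c 3 2 2 2 = 0 := by decide
  have h3 : c 3 3 2 2 = 2 := by decide
  rw [P]
  rw [Polynomial.Chebyshev.U_one]
  simp [Finset.sum_range_succ, h0, h1, h2, h3]
  ring

lemma P4 : P 4 2 2 = (Polynomial.X^2 - 1) * Polynomial.Chebyshev.U ℝ 2 := by
  have h0 : c 4 0 2 2 = 1 := by decide
  have h1 : c 4 1 2 2 = 0 := by decide
  have h2 : c 4 2 2 2 = -5 := by decide
  have h3 : c 4 3 2 2 = 0 := by decide
  have h4 : c 4 4 2 2 = 4 := by decide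
  rw [P]
  rw [Polynomial.Chebyshev.U_two]
  simp [Finset.sum_range_succ, h0, h1, h2, h3, h4]
  ring

lemma P_eq (m : ℕ) :
    P (m+3) 2 2 = (Polynomial.X^2 - 1) * Polynomial.Chebyshev.U ℝ ((m:ℤ)+1) := by
  have key : ∀ j : ℕ, P (j+3) 2 2 = (Polynomial.X^2 - 1) * Polynomial.Chebyshev.U ℝ ((j:ℤ)+1)
      ∧ P (j+4) 2 2 = (Polynomial.X^2 - 1) * Polynomial.Chebyshev.U ℝ ((j:ℤ)+2) := by
    intro j
    induction j with
    | zero =>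
      constructor
      · simpa using P3
      · simpa using P4
    | succ i ih =>
      constructor
      · have h := ih.2
        rw [show i+1+3 = i+4 from rfl]
        rw [show (((i+1:ℕ)):ℤ)+1 = ((i:ℕ):ℤ)+2 by push_cast; ring]
        exact h
      · rw [show i+1+4 = (i+3)+2 from rfl, P_rec (i+3) (by omega),
            show i+3+1 = i+4 from rfl, ih.1, ih.2]
        have hU := Polynomial.Chebyshev.U_add_two ℝ ((i:ℤ)+1)
        rw [show (i:ℤ)+1+2 = ((i:ℕ):ℤ)+1+2 by norm_num] at hU
        rw [show (((i+1:ℕ)):ℤ)+2 = ((i:ℕ):ℤ)+1+2 by push_cast; ring, hU,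
            show ((i:ℤ)+1+1) = ((i:ℕ):ℤ)+2 by push_cast; ring]
        ring
  exact (key m).1

lemma P_natDegree_le (n m p : ℕ) : (P n m p).natDegree ≤ n := by
  rw [P]
  apply Polynomial.natDegree_sum_le_of_forall_le
  intro i hi
  exact le_trans (Polynomial.natDegree_C_mul_X_pow_le _ _)
    (by simpa [Nat.lt_succ_iff] using hi)

lemma P_lead (m : ℕ) : (P (m+3) 2 2).coeff (m+3) = (2:ℝ)^(m+1) := by
  rw [P_coeff]
  have hc : c (m+3) (((m+3:ℕ)):ℤ) 2 2 = 2^(m+1) := by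
    rw [c, if_pos (by push_cast; omega)]
    rw [show ((((m+3:ℕ)):ℤ) + ((m+3:ℕ):ℤ) - 2*(2:ℕ))/2 = ((m:ℤ)+1) by push_cast; omega,
        show ((((m+3:ℕ)):ℤ) - ((m+3:ℕ):ℤ))/2 = 0 by push_cast; omega]
    rw [show ((m:ℤ)+1).toNat = m+1 by omega, show ((0:ℤ)).toNat = 0 by omega]
    rw [f_zero (m+1)]
    ring
  rw [hc]
  push_cast
  ring

lemma P_root (m : ℕ) (k : ℕ) :
    (P (m+3) 2 2).IsRoot (Real.cos (k * Real.pi / (((m+3:ℕ):ℝ) - 1))) := by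
  set θ : ℝ := k * Real.pi / (((m+3:ℕ):ℝ) - 1) with hθ
  have hm2 : (((m+3:ℕ):ℝ) - 1) = (m:ℝ) + 2 := by push_cast; ring
  have hne : ((m:ℝ) + 2) ≠ 0 := by positivity
  rw [Polynomial.IsRoot, P_eq m]
  have hU := Polynomial.Chebyshev.U_real_cos θ ((m:ℤ)+1)
  push_cast at hU
  have harg : ((m:ℝ)+1+1) * θ = (k:ℝ) * Real.pi := by
    rw [hθ, hm2]
    field_simp
    ring
  rw [harg] at hU
  have hsin : Real.sin ((k:ℝ) * Real.pi) = 0 := Real.sin_nat_mul_pi k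
  rw [hsin] at hU
  have hs : Real.cos θ ^ 2 - 1 = -(Real.sin θ ^ 2) := by
    have := Real.sin_sq_add_cos_sq θ
    linarith
  simp only [Polynomial.eval_mul, Polynomial.eval_sub, Polynomial.eval_pow,
    Polynomial.eval_X, Polynomial.eval_one]
  rw [hs]
  calc -(Real.sin θ ^ 2) * (Polynomial.Chebyshev.U ℝ ((m:ℤ)+1)).eval (Real.cos θ)
      = -Real.sin θ * ((Polynomial.Chebyshev.U ℝ ((m:ℤ)+1)).eval (Real.cos θ) * Real.sin θ) := by
        ring
    _ = 0 := by rw [hU]; ring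


/-- For n ≥ 3, the real roots of `P_n` are exactly the n pairwise distinct
numbers `cos(kπ/(n-1))`, k = 0, …, n-1; all roots are simple and lie in [-1, 1]. -/
theorem statement3 (n : ℕ) (hn : 3 ≤ n) :
    ((Finset.range n).val.map (fun k : ℕ => Real.cos (k * Real.pi / ((n : ℝ) - 1)))).Nodup ∧
    (P n 2 2).roots =
      (Finset.range n).val.map (fun k : ℕ => Real.cos (k * Real.pi / ((n : ℝ) - 1))) ∧
    (∀ x : ℝ, (P n 2 2).IsRoot x →
      (P n 2 2).rootMultiplicity x = 1 ∧ x ∈ Set.Icc (-1 : ℝ) 1) := by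
  obtain ⟨m, rfl⟩ : ∃ m : ℕ, n = m + 3 := ⟨n - 3, by omega⟩
  classical
  set g : ℕ → ℝ := fun k : ℕ => Real.cos (k * Real.pi / (((m+3:ℕ) : ℝ) - 1)) with hg
  set M : Multiset ℝ := (Finset.range (m+3)).val.map g with hM
  have hm2 : (((m+3:ℕ):ℝ) - 1) = (m:ℝ) + 2 := by push_cast; ring
  have hmpos : (0:ℝ) < (m:ℝ) + 2 := by positivity
  -- bounds for the angles
  have hIcc : ∀ x : ℕ, x < m+3 → (x : ℝ) * Real.pi / (((m+3:ℕ):ℝ) - 1) ∈ Set.Icc 0 Real.pi := by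
    intro x hx
    rw [hm2]
    constructor
    · positivity
    · rw [div_le_iff₀ hmpos]
      have hx2 : (x:ℝ) ≤ (m:ℝ) + 2 := by
        have : (x:ℝ) ≤ ((m+2:ℕ):ℝ) := by exact_mod_cast Nat.lt_succ_iff.mp hx
        push_cast at this; linarith
      nlinarith [Real.pi_pos]
  -- nodup
  have hnodup : M.Nodup := by
    apply Multiset.Nodup.map_on _ (Finset.range (m+3)).nodup
    intro x hx y hy hxy
    rw [Finset.mem_val, Finset.mem_range] at hx hy
    have h1 := Real.injOn_cos (hIcc x hx) (hIcc y hy) hxy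
    rw [hm2] at h1
    field_simp at h1
    exact_mod_cast (by linarith : (x:ℝ) = y)
  -- each element of M is a root
  have hroot : ∀ x ∈ M, (P (m+3) 2 2).IsRoot x := by
    intro x hx
    rw [hM, Multiset.mem_map] at hx
    obtain ⟨k, _, rfl⟩ := hx
    exact P_root m k
  -- P ≠ 0
  have hP0 : P (m+3) 2 2 ≠ 0 := by
    intro h
    have hl := P_lead m
    rw [h] at hl
    simp only [Polynomial.coeff_zero] at hl
    have : (0:ℝ) < 2^(m+1) := by positivity
    linarith [hl]
  -- M ≤ roots
  have hle : M ≤ (P (m+3) 2 2).roots := by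
    rw [Multiset.le_iff_count]
    intro x
    by_cases hx : x ∈ M
    · rw [Multiset.count_eq_one_of_mem hnodup hx, Polynomial.count_roots]
      exact (Polynomial.rootMultiplicity_pos hP0).2 (hroot x hx)
    · rw [Multiset.count_eq_zero_of_notMem hx]
      exact Nat.zero_le _
  have hcardM : Multiset.card M = m+3 := by
    rw [hM, Multiset.card_map]
    exact Finset.card_range (m+3)
  have hcardroots : Multiset.card (P (m+3) 2 2).roots ≤ m+3 :=
    le_trans (Polynomial.card_roots' _) (P_natDegree_le _ _ _)
  have heq : (P (m+3) 2 2).roots = M := by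
    refine (Multiset.eq_of_le_of_card_le hle ?_).symm
    rw [hcardM]
    exact hcardroots
  refine ⟨hnodup, heq, ?_⟩
  intro x hx
  have hxr : x ∈ (P (m+3) 2 2).roots := by
    rw [Polynomial.mem_roots hP0]
    exact hx
  rw [heq] at hxr
  constructor
  · rw [← Polynomial.count_roots, heq]
    exact Multiset.count_eq_one_of_mem hnodup hxr
  · rw [hM, Multiset.mem_map] at hxr
    obtain ⟨k, _, rfl⟩ := hxr
    exact ⟨Real.neg_one_le_cos _, Real.cos_le_one _⟩
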